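/- Fix j ≥ 1 and s ≥ 0. Define the sequence w : ℕ+ → ℕ by w(n) = mj + 1 where m is the largest integer with 1 + ∑_{i=0}^{m-1}(s + ij + 1) ≤ n (with w(n) = 1 if no such m ≥ 1 exists, i.e., m = 0). Then w satisfies the recursion w(n) = w(n - s - w(n - j)) + j for all n > 3 + 2s + j. -/

import Mathlib

/-- Threshold positions: `golombThresh j s m = 1 + ∑_{i=0}^{m-1} (s + i*j + 1)`. -/
def golombThresh (j s m : ℕ) : ℕ := 1 + ∑ i ∈ Finset.range m, (s + i * j + 1)

/-- The block sequence: `w n = m*j + 1` where `m` is the largest integer with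
    `1 + ∑_{i=0}^{m-1} (s + i*j + 1) ≤ n` (and `w n = 1` if no such `m ≥ 1` exists). -/
def golombW (j s n : ℕ) : ℕ :=
  j * Nat.findGreatest (fun m => golombThresh j s m ≤ n) n + 1

lemma golombThresh_succ (j s m : ℕ) :
    golombThresh j s (m + 1) = golombThresh j s m + (s + m * j + 1) := by
  unfold golombThresh
  rw [Finset.sum_range_succ]
  ring

lemma lt_golombThresh (j s m : ℕ) : m < golombThresh j s m := by
  induction m with
  | zero => simp [golombThresh]
  | succ k ih => rw [golombThresh_succ]; omega

lemma golombThresh_mono (j s : ℕ) : Monotone (golombThresh j s) :=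
  monotone_nat_of_le_succ fun k => by rw [golombThresh_succ]; omega

lemma golombFG_eq (j s n m : ℕ) (h1 : golombThresh j s m ≤ n)
    (h2 : n < golombThresh j s (m + 1)) :
    Nat.findGreatest (fun m => golombThresh j s m ≤ n) n = m := by
  rw [Nat.findGreatest_eq_iff]
  refine ⟨le_trans (le_of_lt (lt_golombThresh j s m)) h1, fun _ => h1, ?_⟩
  intro l hl _ hP
  have := golombThresh_mono j s (show m + 1 ≤ l from hl)
  omega

/-- The block sequence `w` satisfies the generalized Golomb recursion with `λ = 1`
    for all `n > 3 + 2s + j`. -/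
theorem golombW_recursion (j s : ℕ) (hj : 1 ≤ j) :
    ∀ n, 3 + 2 * s + j < n →
      golombW j s n = golombW j s (n - s - golombW j s (n - j)) + j := by
  intro n hn
  have hT2 : golombThresh j s 2 ≤ n := by
    have h0 : golombThresh j s 0 = 1 := by simp [golombThresh]
    have h1 : golombThresh j s 1 = golombThresh j s 0 + (s + 0 * j + 1) :=
      golombThresh_succ j s 0
    have h2 : golombThresh j s 2 = golombThresh j s 1 + (s + 1 * j + 1) :=
      golombThresh_succ j s 1
    omega
  have hn2 : (2:ℕ) ≤ n := by have := lt_golombThresh j s 2; omega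
  have hm2 : 2 ≤ Nat.findGreatest (fun m => golombThresh j s m ≤ n) n :=
    Nat.le_findGreatest hn2 hT2
  obtain ⟨k, hk⟩ : ∃ k, Nat.findGreatest (fun m => golombThresh j s m ≤ n) n = k + 1 :=
    ⟨Nat.findGreatest (fun m => golombThresh j s m ≤ n) n - 1, by omega⟩
  have hk1 : 1 ≤ k := by omega
  have hTm : golombThresh j s (k + 1) ≤ n := by
    have := Nat.findGreatest_spec (P := fun m => golombThresh j s m ≤ n) hn2 hT2
    rwa [hk] at this
  have hlt : n < golombThresh j s (k + 1 + 1) := by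
    by_contra h
    push_neg at h
    have h2 : k + 2 ≤ Nat.findGreatest (fun m => golombThresh j s m ≤ n) n :=
      Nat.le_findGreatest (by have := lt_golombThresh j s (k+1+1); omega) h
    omega
  have hs1 := golombThresh_succ j s k
  have hs2 : golombThresh j s (k + 1 + 1) = golombThresh j s (k + 1) + (s + (k * j + j) + 1) := by
    have := golombThresh_succ j s (k + 1)
    rw [show (k + 1) * j = k * j + j by ring] at this
    exact this
  have hkT := lt_golombThresh j s k
  have hkj : 1 * j ≤ k * j := Nat.mul_le_mul_right j hk1
  have hjk : j * k = k * j := by ring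
  unfold golombW
  rw [hk]
  by_cases hA : golombThresh j s (k + 1) + j ≤ n
  · rw [golombFG_eq j s (n - j) (k + 1) (by omega) (by omega)]
    rw [show n - s - (j * (k + 1) + 1) = n - (s + j * k + j + 1) by
      rw [show j * (k + 1) = j * k + j by ring]; omega]
    rw [golombFG_eq j s (n - (s + j * k + j + 1)) k (by omega) (by omega)]
    ring
  · push_neg at hA
    rw [golombFG_eq j s (n - j) k (by omega) (by omega)]
    rw [show n - s - (j * k + 1) = n - (s + j * k + 1) by omega]
    rw [golombFG_eq j s (n - (s + j * k + 1)) k (by omega) (by omega)]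
    ring
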